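/- Let w be a right-infinite word with p_w(n) ≤ Cn for all n ≥ 1. Then the poset Rec(w) has at most C minimal elements that are not periodic. -/

import Mathlib

/-- The factor of `w` of length `n` starting at position `i`. -/
def factorAt {A : Type*} (w : ℕ → A) (i n : ℕ) : List A :=
  (List.range n).map (fun k => w (i + k))

/-- `u` is a (finite, contiguous) factor of the right-infinite word `w`. -/
def IsFactorOf {A : Type*} (u : List A) (w : ℕ → A) : Prop :=
  ∃ i, u = factorAt w i u.length

/-- The set of factors of `w`. -/
def Fac {A : Type*} (w : ℕ → A) : Set (List A) := {u | IsFactorOf u w}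

/-- `w` is recurrent: every factor occurs at arbitrarily large positions. -/
def Recurrent {A : Type*} (w : ℕ → A) : Prop :=
  ∀ u ∈ Fac w, ∀ N : ℕ, ∃ i ≥ N, u = factorAt w i u.length

/-- `w` is uniformly recurrent: each factor occurs in every sufficiently long factor. -/
def UniformlyRecurrent {A : Type*} (w : ℕ → A) : Prop :=
  ∀ u ∈ Fac w, ∃ N : ℕ, ∀ y ∈ Fac w, y.length = N → u <:+: y

/-- `w` is (purely) periodic. -/
def PeriodicWord {A : Type*} (w : ℕ → A) : Prop :=
  ∃ p ≥ 1, ∀ n, w (n + p) = w n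

/-- `w` is eventually periodic. -/
def EventuallyPeriodicWord {A : Type*} (w : ℕ → A) : Prop :=
  ∃ p ≥ 1, ∃ N, ∀ n ≥ N, w (n + p) = w n

/-- The factor complexity function of `w`. -/
noncomputable def cplx {A : Type*} (w : ℕ → A) (n : ℕ) : ℕ :=
  Set.ncard {u | u ∈ Fac w ∧ u.length = n}

/-- A set of finite words is factor-closed. -/
def FactorClosed {A : Type*} (S : Set (List A)) : Prop :=
  ∀ y ∈ S, ∀ u, u <:+: y → u ∈ S

/-- The radical of `w`. -/
def Rad {A : Type*} (w : ℕ → A) : Set (List A) :=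
  {z | z ∈ Fac w ∧ ∀ Y : Finset (List A),
    (∀ y ∈ Y, y ∈ Fac w ∧ z <:+: y) →
    ∃ N : ℕ, ∀ L : List (List A), L.length = N → (∀ y ∈ L, y ∈ Y) →
      L.flatten ∉ Fac w}

/-- The recurrent spectrum of `w`, with classes identified with their factor sets. -/
def RecSpec {A : Type*} (w : ℕ → A) : Set (Set (List A)) :=
  {F | ∃ v : ℕ → A, Recurrent v ∧ F = Fac v ∧ Fac v ⊆ Fac w}

namespace WAux
variable {A : Type*}

@[simp] lemma length_factorAt (w : ℕ → A) (i n : ℕ) : (factorAt w i n).length = n := by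
  simp [factorAt]

lemma getElem_factorAt (w : ℕ → A) (i n k : ℕ) (h : k < n) :
    (factorAt w i n)[k]'(by simpa [factorAt] using h) = w (i + k) := by
  simp [factorAt]

lemma factorAt_append (w : ℕ → A) (i a b : ℕ) :
    factorAt w i (a + b) = factorAt w i a ++ factorAt w (i + a) b := by
  simp [factorAt, List.range_add, Function.comp_def, add_assoc]

lemma factorAt_mem_Fac (w : ℕ → A) (i n : ℕ) : factorAt w i n ∈ Fac w :=
  ⟨i, by simp⟩

lemma take_factorAt (w : ℕ → A) (i n k : ℕ) (h : k ≤ n) :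
    (factorAt w i n).take k = factorAt w i k := by
  obtain ⟨b, rfl⟩ := Nat.exists_eq_add_of_le h
  rw [factorAt_append]
  exact List.take_left' (by simp)

lemma infix_occ {y : List A} {w : ℕ → A} {s n : ℕ} (h : y <:+: factorAt w s n) :
    ∃ t, t + y.length ≤ n ∧ y = factorAt w (s + t) y.length := by
  obtain ⟨pre, suf, hps⟩ := h
  have hlen : pre.length + (y.length + suf.length) = n := by
    have := congrArg List.length hps
    simpa [add_assoc] using this
  refine ⟨pre.length, by omega, ?_⟩
  have h1 : factorAt w s n = pre ++ (y ++ suf) := by rw [← hps]; simp [List.append_assoc]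
  have h2 : (factorAt w s n).drop pre.length = y ++ suf := by
    rw [h1]
    simpa using List.drop_left pre (y ++ suf)
  have h3 : (factorAt w s n).drop pre.length
      = factorAt w (s + pre.length) (y.length + suf.length) := by
    conv_lhs => rw [show n = pre.length + (y.length + suf.length) by omega, factorAt_append]
    simpa using List.drop_left _ _
  have h4 : y = (factorAt w (s + pre.length) (y.length + suf.length)).take y.length := by
    rw [← h3, h2]; exact (List.take_left' rfl).symm
  rw [take_factorAt _ _ _ _ (by omega)] at h4
  simpa using h4

lemma infix_mem {u z : List A} {w : ℕ → A} (h : u <:+: z) (hz : z ∈ Fac w) : u ∈ Fac w := by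
  obtain ⟨i, hi⟩ := hz
  rw [hi] at h
  obtain ⟨t, _, ht⟩ := infix_occ h
  exact ⟨i + t, ht⟩

lemma infix_factorAt {w : ℕ → A} {i n p l : ℕ} (h : p + l ≤ n) :
    factorAt w (i + p) l <:+: factorAt w i n := by
  refine ⟨factorAt w i p, factorAt w (i + p + l) (n - p - l), ?_⟩
  rw [show n = p + l + (n - p - l) by omega, factorAt_append, factorAt_append]
  simp [add_assoc]

lemma occ_infix {v : ℕ → A} {y : List A} {i s N : ℕ} (hy : y = factorAt v i y.length)
    (h1 : s ≤ i) (h2 : i + y.length ≤ s + N) : y <:+: factorAt v s N := by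
  have h := infix_factorAt (w := v) (i := s) (p := i - s) (l := y.length) (n := N) (by omega)
  rw [show s + (i - s) = i by omega] at h
  rw [hy]; exact h

lemma factorAt_succ (w : ℕ → A) (i n : ℕ) :
    factorAt w i (n + 1) = factorAt w i n ++ [w (i + n)] := by
  rw [factorAt_append w i n 1]
  simp [factorAt, List.range_succ]

lemma factorAt_shift (w : ℕ → A) (N j n : ℕ) :
    factorAt (fun k => w (N + k)) j n = factorAt w (N + j) n := by
  apply List.ext_getElem (by simp)
  intro k h1 h2
  simp [factorAt, add_assoc]

lemma finite_length_eq [Finite A] (n : ℕ) : {u : List A | u.length = n}.Finite := by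
  have hsub : {u : List A | u.length = n} ⊆ Set.range (List.ofFn : (Fin n → A) → List A) := by
    intro u hu
    have hl : u.length = n := hu
    subst hl
    exact ⟨fun k => u[(k : ℕ)]'k.2, List.ofFn_getElem⟩
  exact (Set.finite_range _).subset hsub

/-- Length-`n` factors of `v` containing `y`. -/
def RSet (v : ℕ → A) (y : List A) (n : ℕ) : Set (List A) :=
  {u | u ∈ Fac v ∧ u.length = n ∧ y <:+: u}

lemma RSet_finite [Finite A] (v : ℕ → A) (y : List A) (n : ℕ) : (RSet v y n).Finite :=
  (finite_length_eq n).subset (fun _ hu => hu.2.1)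

lemma key_step [Finite A] (v : ℕ → A) (hrec : Recurrent v)
    (hnp : ¬ EventuallyPeriodicWord v) (y : List A) (hy : y ∈ Fac v)
    (n : ℕ) (hn : y.length ≤ n) :
    (RSet v y n).ncard + 1 ≤ (RSet v y (n + 1)).ncard := by
  by_contra hlt
  push_neg at hlt
  have hle : (RSet v y (n + 1)).ncard ≤ (RSet v y n).ncard := by omega
  set m := y.length with hm
  have hfin1 : (RSet v y n).Finite := RSet_finite v y n
  have hfin2 : (RSet v y (n + 1)).Finite := RSet_finite v y (n + 1)
  have hsub : RSet v y n ⊆ (fun u => u.take n) '' RSet v y (n + 1) := by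
    rintro u ⟨⟨i, hi⟩, hlen, hyu⟩
    rw [hlen] at hi
    refine ⟨factorAt v i (n + 1), ⟨factorAt_mem_Fac v i (n + 1), by simp, ?_⟩, ?_⟩
    · refine hyu.trans ?_
      rw [hi, factorAt_succ]
      exact (List.prefix_append _ _).isInfix
    · simp only
      rw [take_factorAt _ _ _ _ (by omega), ← hi]
  have himle : ((fun u : List A => u.take n) '' RSet v y (n + 1)).ncard
      ≤ (RSet v y (n + 1)).ncard := Set.ncard_image_le hfin2
  have hc1 : (RSet v y n).ncard ≤ ((fun u : List A => u.take n) '' RSet v y (n + 1)).ncard :=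
    Set.ncard_le_ncard hsub (hfin2.image _)
  have hEq : RSet v y n = (fun u : List A => u.take n) '' RSet v y (n + 1) :=
    Set.eq_of_subset_of_ncard_le hsub (by omega) (hfin2.image _)
  have hInj : Set.InjOn (fun u : List A => u.take n) (RSet v y (n + 1)) :=
    Set.injOn_of_ncard_image_eq (by omega) hfin2
  -- every length-n window contains an occurrence of y
  have hwin : ∀ a : ℕ, ∃ i, a ≤ i ∧ i + m ≤ a + n ∧ y = factorAt v i m := by
    intro a
    obtain ⟨i0, hi0a, hi0⟩ := hrec y hy a
    have main : ∀ i, a ≤ i → y = factorAt v i m →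
        ∃ j, a ≤ j ∧ j + m ≤ a + n ∧ y = factorAt v j m := by
      intro i
      induction i using Nat.strong_induction_on with
      | _ i IH =>
        intro hai hyi
        by_cases hcase : i + m ≤ a + n
        · exact ⟨i, hai, hcase, hyi⟩
        · have hge : a + n + 1 ≤ i + m := by omega
          set s := i + m - (n + 1) with hs
          have hsum : s + (n + 1) = i + m := by omega
          have hu' : factorAt v s (n + 1) ∈ RSet v y (n + 1) :=
            ⟨factorAt_mem_Fac v s (n + 1), by simp, occ_infix hyi (by omega) (by omega)⟩
          have htk : (factorAt v s (n + 1)).take n ∈ RSet v y n := by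
            rw [hEq]; exact ⟨_, hu', rfl⟩
          rw [take_factorAt _ _ _ _ (by omega)] at htk
          obtain ⟨t, htm, hyt⟩ := infix_occ htk.2.2
          exact IH (s + t) (by omega) (by omega) hyt
    exact main i0 hi0a hi0
  -- determinism
  have hdet : ∀ a b : ℕ, factorAt v a n = factorAt v b n → v (a + n) = v (b + n) := by
    intro a b hab
    obtain ⟨i, hai, him, hyi⟩ := hwin a
    have hyfa : y <:+: factorAt v a n := occ_infix hyi hai him
    have hpre : ∀ c : ℕ, factorAt v c n <:+: factorAt v c (n + 1) := by
      intro c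
      rw [factorAt_succ]
      exact (List.prefix_append _ _).isInfix
    have ha' : factorAt v a (n + 1) ∈ RSet v y (n + 1) :=
      ⟨factorAt_mem_Fac v a (n + 1), by simp, hyfa.trans (hpre a)⟩
    have hb' : factorAt v b (n + 1) ∈ RSet v y (n + 1) :=
      ⟨factorAt_mem_Fac v b (n + 1), by simp, (hab ▸ hyfa).trans (hpre b)⟩
    have heq2 : factorAt v a (n + 1) = factorAt v b (n + 1) := by
      apply hInj ha' hb'
      simp only
      rw [take_factorAt _ _ _ _ (by omega), take_factorAt _ _ _ _ (by omega)]
      exact hab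
    rw [factorAt_succ, factorAt_succ, hab] at heq2
    have := List.append_cancel_left heq2
    simpa using this
  -- pigeonhole
  obtain ⟨a, b, hne, hfab⟩ :=
    Finite.exists_ne_map_eq_of_infinite (fun j : ℕ => (fun k : Fin n => v (j + (k : ℕ))))
  have hwineq : factorAt v a n = factorAt v b n := by
    apply List.ext_getElem (by simp)
    intro k h1 h2
    simp only [factorAt, List.getElem_map, List.getElem_range]
    exact congrFun hfab ⟨k, by simpa using h1⟩
  have hprop : ∀ k, factorAt v (a + k) n = factorAt v (b + k) n := by
    intro k
    induction k with
    | zero => simpa using hwineq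
    | succ k IH =>
      have hIH : ∀ jj, jj < n → v (a + k + jj) = v (b + k + jj) := by
        intro jj hjj
        have := congrArg (fun l => l[jj]?) IH
        simpa [factorAt, hjj] using this
      apply List.ext_getElem (by simp)
      intro j h1 h2
      simp only [factorAt, List.getElem_map, List.getElem_range]
      by_cases hjn : j + 1 < n
      · have := hIH (j + 1) hjn
        rw [show a + k + (j + 1) = a + (k + 1) + j by omega,
            show b + k + (j + 1) = b + (k + 1) + j by omega] at this
        exact this
      · have hj1 : j + 1 = n := by simp at h1; omega
        have := hdet (a + k) (b + k) IH
        rw [show a + k + n = a + (k + 1) + j by omega,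
            show b + k + n = b + (k + 1) + j by omega] at this
        exact this
  have hfinal : ∀ k, v (a + k) = v (b + k) := by
    intro k
    by_cases hk : k < n
    · have := congrArg (fun l => l[k]?) (hprop 0)
      simpa [factorAt, hk] using this
    · have hk' : k = (k - n) + n := by omega
      have := hdet (a + (k - n)) (b + (k - n)) (hprop (k - n))
      rw [show a + (k - n) + n = a + k by omega, show b + (k - n) + n = b + k by omega] at this
      exact this
  have contra : ∀ a b : ℕ, a < b → (∀ k, v (a + k) = v (b + k)) → False := by
    intro a b hab hper
    apply hnp
    refine ⟨b - a, by omega, a, fun j hj => ?_⟩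
    have h := (hper (j - a)).symm
    rw [show a + (j - a) = j by omega, show b + (j - a) = j + (b - a) by omega] at h
    exact h
  rcases Nat.lt_or_gt_of_ne hne with h | h
  · exact contra a b h hfinal
  · exact contra b a h (fun k => (hfinal k).symm)

lemma key [Finite A] (v : ℕ → A) (hrec : Recurrent v)
    (hnp : ¬ EventuallyPeriodicWord v) (y : List A) (hy : y ∈ Fac v) :
    ∀ n, y.length ≤ n → n + 1 - y.length ≤ (RSet v y n).ncard := by
  intro n hn
  induction n, hn using Nat.le_induction with
  | base =>
    have hmem : y ∈ RSet v y y.length := ⟨hy, rfl, List.infix_refl y⟩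
    have := (Set.ncard_pos (RSet_finite v y y.length)).mpr ⟨y, hmem⟩
    omega
  | succ n hn IH =>
    have := key_step v hrec hnp y hy n hn
    omega
end WAux

open WAux in
theorem card_aperiodic_minimal_le {A : Type*} [Finite A] (w : ℕ → A) (C : ℕ)
    (h : ∀ n ≥ 1, cplx w n ≤ C * n) :
    Set.ncard {F ∈ RecSpec w |
      (∀ G ∈ RecSpec w, F ⊆ G → F = G) ∧
      ¬ ∃ v : ℕ → A, PeriodicWord v ∧ F = Fac v} ≤ C := by
  classical
  set S := {F ∈ RecSpec w |
      (∀ G ∈ RecSpec w, F ⊆ G → F = G) ∧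
      ¬ ∃ v : ℕ → A, PeriodicWord v ∧ F = Fac v} with hSdef
  by_contra hC
  have hCle : C + 1 ≤ S.ncard := by omega
  obtain ⟨t, htS, htc⟩ := Set.exists_subset_card_eq hCle
  have htfin : t.Finite := by
    by_contra hinf
    rw [Set.Infinite.ncard hinf] at htc; omega
  have htfc : htfin.toFinset.card = C + 1 := by
    rw [← Set.ncard_eq_toFinset_card t htfin]; exact htc
  let e := htfin.toFinset.equivFin
  let F : Fin (C + 1) → Set (List A) := fun i => (e.symm (Fin.cast htfc.symm i) : Set (List A))
  have hFinj : Function.Injective F := by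
    intro i j hij
    have := e.symm.injective (Subtype.ext hij)
    simpa [Fin.ext_iff] using congrArg Fin.val this
  have hFS : ∀ i, F i ∈ S := by
    intro i
    apply htS
    show ↑(e.symm (Fin.cast htfc.symm i)) ∈ t
    exact (Set.Finite.mem_toFinset htfin).mp (e.symm (Fin.cast htfc.symm i)).2
  have hFrs : ∀ i, F i ∈ RecSpec w := fun i => (hFS i).1
  have hmax : ∀ i, ∀ G ∈ RecSpec w, F i ⊆ G → F i = G := fun i => (hFS i).2.1
  have hnper : ∀ i, ¬ ∃ v : ℕ → A, PeriodicWord v ∧ F i = Fac v := fun i => (hFS i).2.2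
  -- choose representatives
  choose V hVrec hVF hVsub using hFrs
  -- not eventually periodic
  have hnev : ∀ i, ¬ EventuallyPeriodicWord (V i) := by
    rintro i ⟨p, hp1, N, hN⟩
    apply hnper i
    refine ⟨fun k => V i (N + k), ⟨p, hp1, fun n => ?_⟩, ?_⟩
    · have := hN (N + n) (by omega)
      rw [show N + n + p = N + (n + p) by omega] at this
      exact this
    · rw [hVF i]
      apply Set.Subset.antisymm
      · rintro u hu
        obtain ⟨j', hj'N, hj'⟩ := hVrec i u hu N
        refine ⟨j' - N, ?_⟩
        rw [factorAt_shift, show N + (j' - N) = j' by omega]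
        exact hj'
      · rintro u ⟨j, hj⟩
        refine ⟨N + j, ?_⟩
        rw [factorAt_shift] at hj
        exact hj
  -- incomparability
  have hdistinct : ∀ i j, i ≠ j → ¬ (Fac (V i) ⊆ Fac (V j)) := by
    intro i j hij hsub
    apply hij
    apply hFinj
    have h1 : F i = Fac (V j) := by
      apply hmax i (Fac (V j)) ⟨V j, hVrec j, rfl, hVsub j⟩
      rw [hVF i]; exact hsub
    rw [h1, hVF j]
  -- separating words
  have hyij : ∀ i j : Fin (C + 1), ∃ z : List A, i ≠ j → z ∈ Fac (V i) ∧ z ∉ Fac (V j) := by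
    intro i j
    by_cases hij : i ≠ j
    · obtain ⟨z, hz1, hz2⟩ := Set.not_subset.mp (hdistinct i j hij)
      exact ⟨z, fun _ => ⟨hz1, hz2⟩⟩
    · exact ⟨[], fun hh => absurd hh hij⟩
  choose Z hZ using hyij
  have hocc : ∀ i j : Fin (C + 1), ∃ p : ℕ, i ≠ j → Z i j = factorAt (V i) p (Z i j).length := by
    intro i j
    by_cases hij : i ≠ j
    · obtain ⟨p, hp⟩ := (hZ i j hij).1
      exact ⟨p, fun _ => hp⟩
    · exact ⟨0, fun hh => absurd hh hij⟩
  choose P hP using hocc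
  -- big separating words
  set ni : Fin (C + 1) → ℕ :=
    fun i => 1 + Finset.univ.sup (fun j => P i j + (Z i j).length) with hni
  set Y : Fin (C + 1) → List A := fun i => factorAt (V i) 0 (ni i) with hY
  have hYlen : ∀ i, (Y i).length = ni i := fun i => length_factorAt _ _ _
  have hnieq : ∀ i, ni i = 1 + Finset.univ.sup (fun j => P i j + (Z i j).length) :=
    fun i => rfl
  have hBle : ∀ i j, P i j + (Z i j).length
      ≤ Finset.univ.sup (fun j => P i j + (Z i j).length) :=
    fun i j => Finset.le_sup (f := fun j => P i j + (Z i j).length) (Finset.mem_univ j)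
  have hYmem : ∀ i, Y i ∈ Fac (V i) := fun i => factorAt_mem_Fac _ _ _
  have hYnot : ∀ i j, i ≠ j → Y i ∉ Fac (V j) := by
    intro i j hij hmem
    apply (hZ i j hij).2
    apply infix_mem _ hmem
    rw [hP i j hij]
    have hle : P i j + (Z i j).length ≤ ni i := by
      have h1 := hBle i j
      have h2 := hnieq i
      omega
    have := infix_factorAt (w := V i) (i := 0) (p := P i j) (l := (Z i j).length)
      (n := ni i) (by omega)
    simpa using this
  -- the counting
  set M : ℕ := Finset.univ.sup (fun i => (Y i).length) with hM
  have hMle : ∀ i, (Y i).length ≤ M := by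
    intro i
    rw [hM]
    exact Finset.le_sup (f := fun i => (Y i).length) (Finset.mem_univ i)
  have hM1 : 1 ≤ M := by
    have h0 := hMle 0
    have h1 : 1 ≤ (Y 0).length := by rw [hYlen 0]; have := hnieq 0; omega
    omega
  set n : ℕ := (C + 1) * M with hn
  have hMn : M ≤ n := by
    calc M = 1 * M := (one_mul M).symm
    _ ≤ (C + 1) * M := Nat.mul_le_mul_right M (by omega)
  have hkey : ∀ i, n + 1 - M ≤ (RSet (V i) (Y i) n).ncard := by
    intro i
    have h2 : (Y i).length ≤ M := hMle i
    have h1 := key (V i) (hVrec i) (hnev i) (Y i) (hYmem i) n (le_trans h2 hMn)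
    omega
  have hTfin : {u : List A | u ∈ Fac w ∧ u.length = n}.Finite :=
    (finite_length_eq n).subset (fun u hu => hu.2)
  have hRfin : ∀ i, (RSet (V i) (Y i) n).Finite := fun i => RSet_finite _ _ _
  set Df : Fin (C + 1) → Finset (List A) := fun i => (hRfin i).toFinset with hDf
  have hDcard : ∀ i, (Df i).card = (RSet (V i) (Y i) n).ncard :=
    fun i => (Set.ncard_eq_toFinset_card _ (hRfin i)).symm
  have hdisj : ∀ i ∈ Finset.univ, ∀ j ∈ Finset.univ, i ≠ j → Disjoint (Df i) (Df j) := by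
    intro i _ j _ hij
    rw [Finset.disjoint_left]
    intro u hui huj
    rw [hDf] at hui huj
    simp only [Set.Finite.mem_toFinset] at hui huj
    exact hYnot j i (Ne.symm hij) (infix_mem huj.2.2 hui.1)
  have hsum : ∑ i, (Df i).card ≤ cplx w n := by
    rw [← Finset.card_biUnion hdisj]
    have hsub2 : Finset.univ.biUnion Df ⊆ hTfin.toFinset := by
      intro u hu
      rw [Finset.mem_biUnion] at hu
      obtain ⟨i, _, hui⟩ := hu
      rw [hDf] at hui
      simp only [Set.Finite.mem_toFinset] at hui ⊢
      exact ⟨hVsub i hui.1, hui.2.1⟩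
    calc (Finset.univ.biUnion Df).card ≤ hTfin.toFinset.card := Finset.card_le_card hsub2
    _ = cplx w n := (Set.ncard_eq_toFinset_card _ hTfin).symm
  have hlow : (C + 1) * (n + 1 - M) ≤ ∑ i, (Df i).card := by
    calc (C + 1) * (n + 1 - M) = ∑ _i : Fin (C + 1), (n + 1 - M) := by
          simp [mul_comm]
    _ ≤ ∑ i, (Df i).card := Finset.sum_le_sum (fun i _ => by rw [hDcard]; exact hkey i)
  have hup : cplx w n ≤ C * n := h n (by omega)
  have hk1 : n + 1 - M = C * M + 1 := by
    have h1 : n = C * M + M := by rw [hn]; ring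
    omega
  have hfinal : (C + 1) * (C * M + 1) = C * n + C + 1 := by rw [hn]; ring
  have : C * n + C + 1 ≤ C * n := by
    calc C * n + C + 1 = (C + 1) * (C * M + 1) := hfinal.symm
    _ = (C + 1) * (n + 1 - M) := by rw [hk1]
    _ ≤ ∑ i, (Df i).card := hlow
    _ ≤ cplx w n := hsum
    _ ≤ C * n := hup
  omega
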